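/- Let a, b > 0 with a < b and let (x_m) be a real sequence with x_m = m/√b + c + O(1/m). Fix ε > 0. Then for all sufficiently large A, there exist m, n ≥ A such that |y_n - x_m| ≤ 1/(2√b) + ε, where (y_n) is any real sequence with y_n = n/√a + c' + O(1/n). In other words, inf{|y_n - x_m| : m, n ≥ A} ≤ 1/(2√b) + ε. -/

import Mathlib

theorem close_elements_in_two_arithmetic_like_sequences
    (a b c c' K : ℝ) (ha : 0 < a) (hab : a < b)
    (x y : ℕ → ℝ)
    (hx : ∀ m : ℕ, 1 ≤ m → |x m - (m : ℝ) / Real.sqrt b - c| ≤ K / (m : ℝ))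
    (hy : ∀ n : ℕ, 1 ≤ n → |y n - (n : ℝ) / Real.sqrt a - c'| ≤ K / (n : ℝ))
    (ε : ℝ) (hε : 0 < ε) :
    ∃ A₀ : ℕ, ∀ A : ℕ, A₀ ≤ A →
      ∃ m n : ℕ, A ≤ m ∧ A ≤ n ∧ |y n - x m| ≤ 1 / (2 * Real.sqrt b) + ε := by
  classical
  have hb : (0:ℝ) < b := ha.trans hab
  have hsb : 0 < Real.sqrt b := Real.sqrt_pos.mpr hb
  have hsa : 0 < Real.sqrt a := Real.sqrt_pos.mpr ha
  have hK : 0 ≤ K := by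
    have h1 := hx 1 le_rfl
    have h0 := abs_nonneg (x 1 - (1:ℝ) / Real.sqrt b - c)
    simp only [Nat.cast_one, div_one] at h1
    linarith
  refine ⟨max 1 ⌈4 * K / ε⌉₊, fun A hA => ?_⟩
  have hA1 : 1 ≤ A := le_trans (le_max_left _ _) hA
  have hKm : ∀ m : ℕ, A ≤ m → K / (m:ℝ) ≤ ε / 4 := by
    intro m hm
    have hm1 : (1:ℝ) ≤ (m:ℝ) := by exact_mod_cast le_trans hA1 hm
    have hmpos : (0:ℝ) < (m:ℝ) := by linarith
    have h4 : (4 * K / ε : ℝ) ≤ (m:ℝ) := by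
      calc (4 * K / ε : ℝ) ≤ (⌈4 * K / ε⌉₊ : ℝ) := Nat.le_ceil _
        _ ≤ (A:ℝ) := by exact_mod_cast le_trans (le_max_right _ _) hA
        _ ≤ (m:ℝ) := by exact_mod_cast hm
    have h5 : 4 * K ≤ (m:ℝ) * ε := (div_le_iff₀ hε).mp h4
    rw [div_le_iff₀ hmpos]
    nlinarith
  -- pick n ≥ A with y n ≥ x A
  set n : ℕ := max A (⌈Real.sqrt a * (x A - c' + K)⌉₊ + 1) with hn_def
  have hnA : A ≤ n := le_max_left _ _
  have hn1 : 1 ≤ n := le_trans hA1 hnA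
  have hn1R : (1:ℝ) ≤ (n:ℝ) := by exact_mod_cast hn1
  have hyn : x A ≤ y n := by
    have h1 := (abs_le.mp (hy n hn1)).1
    have h2 : Real.sqrt a * (x A - c' + K) ≤ (n:ℝ) := by
      calc Real.sqrt a * (x A - c' + K) ≤ (⌈Real.sqrt a * (x A - c' + K)⌉₊ : ℝ) :=
            Nat.le_ceil _
        _ ≤ (n:ℝ) := by exact_mod_cast le_trans (Nat.le_succ _) (le_max_right _ _)
    have h3 : x A - c' + K ≤ (n:ℝ) / Real.sqrt a := by
      rw [le_div_iff₀ hsa]; nlinarith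
    have h4 : K / (n:ℝ) ≤ K := div_le_self hK hn1R
    linarith
  -- the set of k with y n < x (A + k) is nonempty
  have hex : ∃ k : ℕ, y n < x (A + k) := by
    refine ⟨⌈Real.sqrt b * (y n - c + K)⌉₊ + 1, ?_⟩
    set k := ⌈Real.sqrt b * (y n - c + K)⌉₊ + 1 with hk_def
    have hAk1 : 1 ≤ A + k := le_trans hA1 (Nat.le_add_right _ _)
    have hAk1R : (1:ℝ) ≤ ((A + k : ℕ):ℝ) := by exact_mod_cast hAk1
    have h1 := (abs_le.mp (hx (A + k) hAk1)).1
    have h2 : Real.sqrt b * (y n - c + K) + 1 ≤ ((A + k : ℕ):ℝ) := by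
      have : Real.sqrt b * (y n - c + K) ≤ (⌈Real.sqrt b * (y n - c + K)⌉₊ : ℝ) :=
        Nat.le_ceil _
      have hk : ((k:ℕ):ℝ) = (⌈Real.sqrt b * (y n - c + K)⌉₊ : ℝ) + 1 := by
        push_cast [hk_def]; ring
      have hAk : ((A + k : ℕ):ℝ) = (A:ℝ) + (k:ℝ) := by push_cast; ring
      have hA0 : (0:ℝ) ≤ (A:ℝ) := Nat.cast_nonneg _
      linarith
    have h3 : y n - c + K < ((A + k : ℕ):ℝ) / Real.sqrt b := by
      rw [lt_div_iff₀ hsb]; nlinarith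
    have h4 : K / ((A + k : ℕ):ℝ) ≤ K := div_le_self hK hAk1R
    linarith
  set k0 := Nat.find hex with hk0_def
  have hk0spec : y n < x (A + k0) := Nat.find_spec hex
  have hk0pos : 1 ≤ k0 := by
    rcases Nat.eq_zero_or_pos k0 with h | h
    · exfalso; rw [h] at hk0spec; simp at hk0spec; linarith
    · exact h
  set m := A + (k0 - 1) with hm_def
  have hmA : A ≤ m := Nat.le_add_right _ _
  have hm1 : 1 ≤ m := le_trans hA1 hmA
  have hmsucc : m + 1 = A + k0 := by omega
  have hxm_le : x m ≤ y n := by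
    have := Nat.find_min hex (show k0 - 1 < k0 by omega)
    exact le_of_not_gt this
  have hxm1_gt : y n < x (m + 1) := by rw [hmsucc]; exact hk0spec
  -- gap bound
  have hm1R : (1:ℝ) ≤ (m:ℝ) := by exact_mod_cast hm1
  have hmlow := (abs_le.mp (hx m hm1)).1
  have hmup := (abs_le.mp (hx (m+1) (le_trans hm1 (Nat.le_succ _)))).2
  have hK1 : K / (m:ℝ) ≤ ε / 4 := hKm m hmA
  have hK2 : K / ((m+1 : ℕ):ℝ) ≤ ε / 4 := hKm (m+1) (le_trans hmA (Nat.le_succ _))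
  have hcast : ((m+1 : ℕ):ℝ) = (m:ℝ) + 1 := by push_cast; ring
  have hgap : x (m+1) - x m ≤ 1 / Real.sqrt b + ε / 2 := by
    have hdiff : ((m:ℝ) + 1) / Real.sqrt b - (m:ℝ) / Real.sqrt b = 1 / Real.sqrt b := by
      field_simp
      ring
    rw [hcast] at hmup hK2
    linarith
  have hhalf : 1 / Real.sqrt b = 2 * (1 / (2 * Real.sqrt b)) := by
    field_simp
  by_cases hcase : y n - x m ≤ (x (m+1) - x m) / 2
  · refine ⟨m, n, hmA, hnA, ?_⟩
    rw [abs_of_nonneg (by linarith)]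
    linarith
  · refine ⟨m + 1, n, le_trans hmA (Nat.le_succ _), hnA, ?_⟩
    rw [abs_of_nonpos (by linarith)]
    linarith
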